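/- Lemma 1: In the canonical T-LEK model, for every world w_I ∈ W_c and all formulas Φ, Ψ ∈ L_{T-LEK}, if BΦ ∈ w_I but BΨ ∉ w_I, then there exists v_I ∈ R_c(w_I) such that Φ ∈ v_I if and only if Ψ ∉ v_I. -/

import Mathlib

open Classical

/-! ## Time intervals -/

/-- A time interval `[lo, hi]` over ℕ; `hi = ⊤` encodes the infinite interval `[lo, ∞)`. -/
structure TInt where
  lo : ℕ
  hi : ℕ∞
deriving DecidableEq

/-- The set of time instants belonging to the interval. -/
def TInt.toSet (I : TInt) : Set ℕ := {n | I.lo ≤ n ∧ (n : ℕ∞) ≤ I.hi}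

/-- The smallest interval including both given intervals (the operation `⊎`). -/
noncomputable def TInt.hull (I J : TInt) : TInt := ⟨min I.lo J.lo, max I.hi J.hi⟩

/-! ## The static language L_{T-LEK} -/

/-- Formulas of `L_{T-LEK}`: atoms `p(t1,t2)` (predicate symbols coded by ℕ),
negation, the MTL `always` operator `□_I`, belief `B`, knowledge `K`,
conjunction and implication. -/
inductive Formula where
  | atom : ℕ → ℕ → ℕ → Formula
  | neg  : Formula → Formula
  | box  : TInt → Formula → Formula
  | bel  : Formula → Formula
  | know : Formula → Formula
  | and  : Formula → Formula → Formula
  | imp  : Formula → Formula → Formula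
deriving DecidableEq

/-- Defined biconditional. -/
def Formula.iff (φ ψ : Formula) : Formula := .and (.imp φ ψ) (.imp ψ φ)

/-- The time function `T` on static formulas. -/
noncomputable def Formula.timeOf : Formula → TInt
  | .atom _ t1 t2 => ⟨t1, (t2 : ℕ∞)⟩
  | .neg φ => φ.timeOf
  | .box I _ => I
  | .bel φ => φ.timeOf
  | .know φ => φ.timeOf
  | .and φ ψ => TInt.hull φ.timeOf ψ.timeOf
  | .imp φ ψ => TInt.hull φ.timeOf ψ.timeOf

/-! ## Models -/

/-- The data of a T-LEK model: worlds, accessibility `R`, neighbourhood `N`,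
valuation `V` (on coded atoms `p(t1,t2)`) and the interval `itv w` indexing each
world `w` (so `w` is the world `w_I` with `I = itv w`). -/
structure TModel where
  W : Type
  R : W → W → Prop
  N : W → Set (Set W)
  V : W → ℕ → ℕ → ℕ → Prop
  itv : W → TInt

/-- The conditions making the data a genuine T-LEK model: `R` is an equivalence
relation, every neighbourhood member consists of `R`-reachable worlds, and
neighbourhoods are monotone along `R`. -/
def TModel.IsTLEK (M : TModel) : Prop :=
  Equivalence M.R ∧
  (∀ w, ∀ X ∈ M.N w, ∀ v ∈ X, M.R w v) ∧
  (∀ w v, M.R w v → M.N w ⊆ M.N v)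

/-- Truth conditions for `L_{T-LEK}` formulas at a world of a model. -/
def TModel.sat (M : TModel) : M.W → Formula → Prop
  | w, .atom p t1 t2 =>
      M.V w p t1 t2 ∧ (TInt.mk t1 (t2 : ℕ∞)).toSet ⊆ (M.itv w).toSet
  | w, .neg φ => ¬ M.sat w φ ∧ φ.timeOf.toSet ⊆ (M.itv w).toSet
  | w, .and φ ψ => M.sat w φ ∧ M.sat w ψ ∧
      φ.timeOf.toSet ⊆ (M.itv w).toSet ∧ ψ.timeOf.toSet ⊆ (M.itv w).toSet
  | w, .imp φ ψ => (¬ M.sat w φ ∨ M.sat w ψ) ∧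
      φ.timeOf.toSet ⊆ (M.itv w).toSet ∧ ψ.timeOf.toSet ⊆ (M.itv w).toSet
  | w, .bel φ =>
      {v | M.sat v φ ∧ M.R w v} ∈ M.N w ∧ φ.timeOf.toSet ⊆ (M.itv w).toSet
  | w, .know φ =>
      (∀ v, M.R w v → M.sat v φ) ∧ φ.timeOf.toSet ⊆ (M.itv w).toSet
  | w, .box J φ =>
      φ.timeOf.toSet ⊆ J.toSet ∧ J.toSet ⊆ (M.itv w).toSet ∧
      ∀ v, M.R w v → M.sat v φ

/-! ## Mental operations and the dynamic language -/

/-- Mental operations: `+φ` (learning a perception), `∩(φ,ψ)` (conjunction),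
`⊢(φ,ψ)` (inference), `⊣(p(t1,t2),q(t3,t4))` (revision, coded by the predicate
symbols and time stamps of the two atoms). -/
inductive MOp where
  | plus  : Formula → MOp
  | inter : Formula → Formula → MOp
  | infer : Formula → Formula → MOp
  | rev   : ℕ → ℕ → ℕ → ℕ → ℕ → ℕ → MOp
deriving DecidableEq

/-- The updated neighbourhood model `M^α`. -/
noncomputable def TModel.update (M : TModel) (α : MOp) : TModel :=
  { M with
    N := fun w =>
      match α with
      | .plus φ =>
          if φ.timeOf.toSet ⊆ (M.itv w).toSet then
            insert {v | M.sat v φ ∧ M.R w v} (M.N w)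
          else M.N w
      | .inter φ ψ =>
          if M.sat w (.bel φ) ∧ M.sat w (.bel ψ) ∧
              (TInt.hull φ.timeOf ψ.timeOf).toSet ⊆ (M.itv w).toSet then
            insert {v | M.sat v (.and φ ψ) ∧ M.R w v} (M.N w)
          else M.N w
      | .infer φ ψ =>
          if M.sat w (.bel φ) ∧ M.sat w (.know (.imp φ ψ)) ∧
              ψ.timeOf.toSet ⊆ (M.itv w).toSet then
            insert {v | M.sat v ψ ∧ M.R w v} (M.N w)
          else M.N w
      | .rev p t1 t2 q t3 t4 =>
          if M.sat w (.bel (.atom p t1 t2)) ∧ M.sat w (.bel (.atom q t3 t4)) ∧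
              M.sat w (.know (.imp (.atom p t1 t2) (.neg (.atom q t3 t4)))) ∧
              (Set.Icc t3 t4 \ Set.Icc t1 t2) ⊆ (M.itv w).toSet ∧
              ¬ ∃ t5 t6, Set.Icc t1 t2 ⊂ Set.Icc t5 t6 ∧
                  M.sat w (.bel (.atom q t5 t6)) then
            M.N w \ {{v | M.sat v (.atom q (max t1 t3) (min t2 t4)) ∧ M.R w v}}
          else M.N w }

/-- Formulas of the dynamic language `L_{T-DLEK}`: the static language enriched
with `[α]φ` for mental operations `α`. -/
inductive DFormula where
  | atom : ℕ → ℕ → ℕ → DFormula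
  | neg  : DFormula → DFormula
  | box  : TInt → DFormula → DFormula
  | bel  : DFormula → DFormula
  | know : DFormula → DFormula
  | and  : DFormula → DFormula → DFormula
  | imp  : DFormula → DFormula → DFormula
  | act  : MOp → DFormula → DFormula
deriving DecidableEq

/-- Embedding of the static language into the dynamic one. -/
def Formula.toD : Formula → DFormula
  | .atom p t1 t2 => .atom p t1 t2
  | .neg φ => .neg φ.toD
  | .box I φ => .box I φ.toD
  | .bel φ => .bel φ.toD
  | .know φ => .know φ.toD
  | .and φ ψ => .and φ.toD ψ.toD
  | .imp φ ψ => .imp φ.toD ψ.toD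

/-- Defined biconditional on dynamic formulas. -/
def DFormula.iff (φ ψ : DFormula) : DFormula := .and (.imp φ ψ) (.imp ψ φ)

/-- Defined (classical) disjunction on dynamic formulas. -/
def DFormula.orF (φ ψ : DFormula) : DFormula := .neg (.and (.neg φ) (.neg ψ))

/-- The time interval associated to a mental operation. -/
noncomputable def MOp.time : MOp → TInt
  | .plus φ => φ.timeOf
  | .inter φ ψ => TInt.hull φ.timeOf ψ.timeOf
  | .infer _ ψ => ψ.timeOf
  | .rev _ _ _ _ t3 t4 => ⟨t3, (t4 : ℕ∞)⟩

/-- The time function `T` on dynamic formulas. -/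
noncomputable def DFormula.timeOf : DFormula → TInt
  | .atom _ t1 t2 => ⟨t1, (t2 : ℕ∞)⟩
  | .neg φ => φ.timeOf
  | .box I _ => I
  | .bel φ => φ.timeOf
  | .know φ => φ.timeOf
  | .and φ ψ => TInt.hull φ.timeOf ψ.timeOf
  | .imp φ ψ => TInt.hull φ.timeOf ψ.timeOf
  | .act α _ => α.time

/-- Truth conditions for `L_{T-DLEK}` formulas:
`M,w ⊨ [α]φ` iff `M^α,w ⊨ φ` and `T(φ) ⊆ I`. -/
noncomputable def TModel.dsat : (M : TModel) → M.W → DFormula → Prop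
  | M, w, .atom p t1 t2 =>
      M.V w p t1 t2 ∧ (TInt.mk t1 (t2 : ℕ∞)).toSet ⊆ (M.itv w).toSet
  | M, w, .neg φ => ¬ M.dsat w φ ∧ φ.timeOf.toSet ⊆ (M.itv w).toSet
  | M, w, .and φ ψ => M.dsat w φ ∧ M.dsat w ψ ∧
      φ.timeOf.toSet ⊆ (M.itv w).toSet ∧ ψ.timeOf.toSet ⊆ (M.itv w).toSet
  | M, w, .imp φ ψ => (¬ M.dsat w φ ∨ M.dsat w ψ) ∧
      φ.timeOf.toSet ⊆ (M.itv w).toSet ∧ ψ.timeOf.toSet ⊆ (M.itv w).toSet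
  | M, w, .bel φ =>
      {v | M.dsat v φ ∧ M.R w v} ∈ M.N w ∧ φ.timeOf.toSet ⊆ (M.itv w).toSet
  | M, w, .know φ =>
      (∀ v, M.R w v → M.dsat v φ) ∧ φ.timeOf.toSet ⊆ (M.itv w).toSet
  | M, w, .box J φ =>
      φ.timeOf.toSet ⊆ J.toSet ∧ J.toSet ⊆ (M.itv w).toSet ∧
      ∀ v, M.R w v → M.dsat v φ
  | M, w, .act α φ =>
      (M.update α).dsat w φ ∧ φ.timeOf.toSet ⊆ (M.itv w).toSet
termination_by M w φ => sizeOf φ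
decreasing_by all_goals simp_wf <;> omega

/-! ## The T-LEK proof system -/

/-- Evaluation of a formula under an arbitrary propositional assignment to its
non-Boolean components: used to express "being (a substitution instance of) a
classical propositional tautology". -/
def Formula.evalP (v : Formula → Prop) : Formula → Prop
  | .neg φ => ¬ φ.evalP v
  | .and φ ψ => φ.evalP v ∧ ψ.evalP v
  | .imp φ ψ => φ.evalP v → ψ.evalP v
  | .atom p t1 t2 => v (.atom p t1 t2)
  | .box I φ => v (.box I φ)
  | .bel φ => v (.bel φ)
  | .know φ => v (.know φ)

/-- Theorems of the T-LEK proof system: classical propositional tautologies,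
modus ponens, necessitation for `K`, and the five T-LEK axioms. -/
inductive TLEKThm : Formula → Prop where
  | taut (φ : Formula) : (∀ v, φ.evalP v) → TLEKThm φ
  | mp {φ ψ : Formula} : TLEKThm (.imp φ ψ) → TLEKThm φ → TLEKThm ψ
  | nec {φ : Formula} : TLEKThm φ → TLEKThm (.know φ)
  | axK (φ ψ : Formula) :
      TLEKThm (.imp (.and (.know φ) (.know (.imp φ ψ))) (.know ψ))
  | axT (φ : Formula) : TLEKThm (.imp (.know φ) φ)
  | ax4 (φ : Formula) : TLEKThm (.imp (.know φ) (.know (.know φ)))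
  | ax5 (φ : Formula) :
      TLEKThm (.imp (.neg (.know φ)) (.know (.neg (.know φ))))
  | axB (φ ψ : Formula) :
      TLEKThm (.imp (.and (.bel φ) (.know (Formula.iff φ ψ))) (.bel ψ))

/-! ## The T-DLEK proof system -/

/-- Propositional evaluation for dynamic formulas. -/
def DFormula.evalP (v : DFormula → Prop) : DFormula → Prop
  | .neg φ => ¬ φ.evalP v
  | .and φ ψ => φ.evalP v ∧ ψ.evalP v
  | .imp φ ψ => φ.evalP v → ψ.evalP v
  | .atom p t1 t2 => v (.atom p t1 t2)
  | .box I φ => v (.box I φ)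
  | .bel φ => v (.bel φ)
  | .know φ => v (.know φ)
  | .act α φ => v (.act α φ)

/-- Replacement of (all occurrences of) the subformula `ψ` by `χ` in `φ`,
i.e. `φ[ψ/χ]`. -/
def DFormula.substF (ψ χ : DFormula) (φ : DFormula) : DFormula :=
  if φ = ψ then χ
  else
    match φ with
    | .atom p t1 t2 => .atom p t1 t2
    | .neg a => .neg (substF ψ χ a)
    | .box I a => .box I (substF ψ χ a)
    | .bel a => .bel (substF ψ χ a)
    | .know a => .know (substF ψ χ a)
    | .and a b => .and (substF ψ χ a) (substF ψ χ b)
    | .imp a b => .imp (substF ψ χ a) (substF ψ χ b)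
    | .act α a => .act α (substF ψ χ a)

/-- Theorems of the T-DLEK proof system: the T-LEK system (on the dynamic
language) plus the reduction axioms and the replacement rule. -/
inductive TDLEKThm : DFormula → Prop where
  | taut (φ : DFormula) : (∀ v, φ.evalP v) → TDLEKThm φ
  | mp {φ ψ : DFormula} : TDLEKThm (.imp φ ψ) → TDLEKThm φ → TDLEKThm ψ
  | nec {φ : DFormula} : TDLEKThm φ → TDLEKThm (.know φ)
  | axK (φ ψ : DFormula) :
      TDLEKThm (.imp (.and (.know φ) (.know (.imp φ ψ))) (.know ψ))
  | axT (φ : DFormula) : TDLEKThm (.imp (.know φ) φ)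
  | ax4 (φ : DFormula) : TDLEKThm (.imp (.know φ) (.know (.know φ)))
  | ax5 (φ : DFormula) :
      TDLEKThm (.imp (.neg (.know φ)) (.know (.neg (.know φ))))
  | axB (φ ψ : DFormula) :
      TDLEKThm (.imp (.and (.bel φ) (.know (DFormula.iff φ ψ))) (.bel ψ))
  | redAtom (α : MOp) (p t1 t2 : ℕ) :
      TDLEKThm (DFormula.iff (.act α (.atom p t1 t2)) (.atom p t1 t2))
  | redNeg (α : MOp) (φ : DFormula) :
      TDLEKThm (DFormula.iff (.act α (.neg φ)) (.neg (.act α φ)))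
  | redAnd (α : MOp) (φ ψ : DFormula) :
      TDLEKThm (DFormula.iff (.act α (.and φ ψ)) (.and (.act α φ) (.act α ψ)))
  | redK (α : MOp) (φ : DFormula) :
      TDLEKThm (DFormula.iff (.act α (.know φ)) (.know (.act α φ)))
  | redPlus (φ : Formula) (ψ : DFormula) :
      TDLEKThm (DFormula.iff (.act (.plus φ) (.bel ψ))
        (DFormula.orF (.bel (.act (.plus φ) ψ))
          (.know (DFormula.iff (.act (.plus φ) ψ) φ.toD))))
  | redInfer (φ ψ : Formula) (χ : DFormula) :
      TDLEKThm (DFormula.iff (.act (.infer φ ψ) (.bel χ))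
        (DFormula.orF (.bel (.act (.infer φ ψ) χ))
          (.and (.bel φ.toD) (.and (.know (.imp φ.toD ψ.toD))
            (.know (DFormula.iff (.act (.infer φ ψ) χ) ψ.toD))))))
  | redRev (p t1 t2 q t3 t4 : ℕ) (χ : DFormula) :
      TDLEKThm (DFormula.iff (.act (.rev p t1 t2 q t3 t4) (.bel χ))
        (DFormula.orF (.bel (.act (.rev p t1 t2 q t3 t4) χ))
          (.and (.bel (.atom p t1 t2))
            (.and (.know (.imp (.atom p t1 t2) (.neg (.atom q t3 t4))))
              (.know (DFormula.iff (.act (.rev p t1 t2 q t3 t4) χ)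
                (.neg (.atom q t3 t4))))))))
  | redInter (φ ψ : Formula) (χ : DFormula) :
      TDLEKThm (DFormula.iff (.act (.inter φ ψ) (.bel χ))
        (DFormula.orF (.bel (.act (.inter φ ψ) χ))
          (.and (.and (.bel φ.toD) (.bel ψ.toD))
            (.know (DFormula.iff (.act (.inter φ ψ) χ) (.and φ.toD ψ.toD))))))
  | repl {ψ χ : DFormula} (φ : DFormula) :
      TDLEKThm (DFormula.iff ψ χ) →
      TDLEKThm (DFormula.iff φ (DFormula.substF ψ χ φ))

/-! ## Consistency, the canonical model -/

/-- Conjunction of a finite list of formulas (empty list gives a tautology). -/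
def conjList : List Formula → Formula
  | [] => .imp (.atom 0 0 0) (.atom 0 0 0)
  | φ :: l => .and φ (conjList l)

/-- A set of formulas is consistent if no finite conjunction of its members is
refutable in the T-LEK proof system. -/
def Consistent (Γ : Set Formula) : Prop :=
  ¬ ∃ l : List Formula, (∀ φ ∈ l, φ ∈ Γ) ∧ TLEKThm (.neg (conjList l))

/-- Maximal consistent sets of `L_{T-LEK}` formulas. -/
def MaxConsistent (Γ : Set Formula) : Prop :=
  Consistent Γ ∧ ∀ φ, φ ∉ Γ → ¬ Consistent (insert φ Γ)

/-- Worlds of the canonical model: maximal consistent sets. -/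
def CWorld : Type := {Γ : Set Formula // MaxConsistent Γ}

/-- The canonical accessibility relation `R_c`. -/
def CRel (w v : CWorld) : Prop :=
  ∀ φ : Formula, Formula.know φ ∈ w.1 ↔ Formula.know φ ∈ v.1

/-- `A_Φ(w) = {v ∈ R_c(w) | Φ ∈ v}`. -/
def CSet (w : CWorld) (Φ : Formula) : Set CWorld :=
  {v | CRel w v ∧ Φ ∈ v.1}

/-- The canonical T-LEK model. -/
noncomputable def canonicalTLEK : TModel where
  W := CWorld
  R := CRel
  N := fun w => {X | ∃ Φ : Formula, Formula.bel Φ ∈ w.1 ∧ X = CSet w Φ}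
  V := fun w p t1 t2 => Formula.atom p t1 t2 ∈ w.1
  itv := fun w =>
    ⟨sInf {t | ∃ p t', Formula.atom p t t' ∈ w.1},
     sSup {x : ℕ∞ | ∃ p t : ℕ, ∃ t' : ℕ, x = (t' : ℕ∞) ∧ Formula.atom p t t' ∈ w.1}⟩

/-! ## Finite-time formulas and derivability from hypotheses -/

/-- All time intervals occurring in a static formula are finite. -/
def Formula.FinTime : Formula → Prop
  | .atom _ _ _ => True
  | .neg φ => φ.FinTime
  | .box I φ => I.hi ≠ ⊤ ∧ φ.FinTime
  | .bel φ => φ.FinTime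
  | .know φ => φ.FinTime
  | .and φ ψ => φ.FinTime ∧ ψ.FinTime
  | .imp φ ψ => φ.FinTime ∧ ψ.FinTime

/-- All time intervals occurring in a mental operation are finite. -/
def MOp.FinTime : MOp → Prop
  | .plus φ => φ.FinTime
  | .inter φ ψ => φ.FinTime ∧ ψ.FinTime
  | .infer φ ψ => φ.FinTime ∧ ψ.FinTime
  | .rev _ _ _ _ _ _ => True

/-- All time intervals occurring in a dynamic formula are finite. -/
def DFormula.FinTime : DFormula → Prop
  | .atom _ _ _ => True
  | .neg φ => φ.FinTime
  | .box I φ => I.hi ≠ ⊤ ∧ φ.FinTime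
  | .bel φ => φ.FinTime
  | .know φ => φ.FinTime
  | .and φ ψ => φ.FinTime ∧ ψ.FinTime
  | .imp φ ψ => φ.FinTime ∧ ψ.FinTime
  | .act α φ => α.FinTime ∧ φ.FinTime

/-- `φ` is derivable from the hypotheses `Γ` in T-LEK. -/
def DerivFrom (Γ : Set Formula) (φ : Formula) : Prop :=
  ∃ l : List Formula, (∀ ψ ∈ l, ψ ∈ Γ) ∧ TLEKThm (.imp (conjList l) φ)

/-- Conjunction of a finite list of dynamic formulas. -/
def dConjList : List DFormula → DFormula
  | [] => .imp (.atom 0 0 0) (.atom 0 0 0)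
  | φ :: l => .and φ (dConjList l)

/-- `φ` is derivable from the hypotheses `Γ` in T-DLEK. -/
def DDerivFrom (Γ : Set DFormula) (φ : DFormula) : Prop :=
  ∃ l : List DFormula, (∀ ψ ∈ l, ψ ∈ Γ) ∧ TDLEKThm (.imp (dConjList l) φ)

/-! ## Auxiliary lemmas for the canonical model -/

lemma thm_mp2 {a b c : Formula} (h : TLEKThm (.imp a (.imp b c)))
    (ha : TLEKThm a) (hb : TLEKThm b) : TLEKThm c :=
  TLEKThm.mp (TLEKThm.mp h ha) hb

lemma conj_mem : ∀ (l : List Formula) (ψ : Formula), ψ ∈ l →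
    TLEKThm (.imp (conjList l) ψ)
  | a :: t, ψ, h => by
    rcases List.mem_cons.1 h with rfl | h
    · exact TLEKThm.taut _ (by intro v; simp only [conjList, Formula.evalP]; tauto)
    · have ih := conj_mem t ψ h
      exact TLEKThm.mp (TLEKThm.taut (.imp (.imp (conjList t) ψ)
        (.imp (conjList (a :: t)) ψ))
        (by intro v; simp only [conjList, Formula.evalP]; tauto)) ih

lemma conj_intro (L : List Formula) : ∀ (l : List Formula),
    (∀ ψ ∈ l, TLEKThm (.imp (conjList L) ψ)) →
    TLEKThm (.imp (conjList L) (conjList l))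
  | [], _ => TLEKThm.taut _ (by intro v; simp only [conjList, Formula.evalP]; tauto)
  | a :: t, h => by
    have ha := h a (List.mem_cons_self)
    have ih := conj_intro L t (fun ψ hψ => h ψ (List.mem_cons_of_mem _ hψ))
    exact thm_mp2 (TLEKThm.taut (.imp (.imp (conjList L) a)
      (.imp (.imp (conjList L) (conjList t)) (.imp (conjList L) (conjList (a :: t)))))
      (by intro v; simp only [conjList, Formula.evalP]; tauto)) ha ih

lemma mcs_mem_of_deriv {Γ : Set Formula} (hΓ : MaxConsistent Γ) {φ : Formula}
    (h : DerivFrom Γ φ) : φ ∈ Γ := by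
  by_contra hφ
  obtain ⟨l, hl, hthm⟩ := h
  obtain ⟨l2, hl2, hthm2⟩ := not_not.1 (hΓ.2 φ hφ)
  set L := l ++ l2.filter (fun ψ => decide (ψ ≠ φ)) with hLdef
  have hLΓ : ∀ ψ ∈ L, ψ ∈ Γ := by
    intro ψ hψ
    rcases List.mem_append.1 hψ with h1 | h1
    · exact hl ψ h1
    · have := List.mem_filter.1 h1
      have hne : ψ ≠ φ := by simpa using this.2
      rcases hl2 ψ this.1 with h2 | h2
      · exact absurd h2 hne
      · exact h2
  have himp : TLEKThm (.imp (conjList L) (conjList l2)) := by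
    refine conj_intro L l2 (fun ψ hψ => ?_)
    by_cases he : ψ = φ
    · subst he
      have h1 : TLEKThm (.imp (conjList L) (conjList l)) :=
        conj_intro L l (fun ψ' hψ' => conj_mem L ψ' (List.mem_append_left _ hψ'))
      exact thm_mp2 (TLEKThm.taut (.imp (.imp (conjList L) (conjList l))
        (.imp (.imp (conjList l) ψ) (.imp (conjList L) ψ)))
        (by intro v; simp only [Formula.evalP]; tauto)) h1 hthm
    · exact conj_mem L ψ (List.mem_append_right _ (List.mem_filter.2 ⟨hψ, by simp [he]⟩))
  have hnL : TLEKThm (.neg (conjList L)) :=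
    thm_mp2 (TLEKThm.taut (.imp (.imp (conjList L) (conjList l2))
      (.imp (.neg (conjList l2)) (.neg (conjList L))))
      (by intro v; simp only [Formula.evalP]; tauto)) himp hthm2
  exact hΓ.1 ⟨L, hLΓ, hnL⟩

lemma mcs_mem_of_thm {Γ : Set Formula} (hΓ : MaxConsistent Γ) {φ : Formula}
    (h : TLEKThm φ) : φ ∈ Γ :=
  mcs_mem_of_deriv hΓ ⟨[], by simp, TLEKThm.mp (TLEKThm.taut
    (.imp φ (.imp (conjList []) φ))
    (by intro v; simp only [conjList, Formula.evalP]; tauto)) h⟩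

lemma mcs_mp {Γ : Set Formula} (hΓ : MaxConsistent Γ) {a b : Formula}
    (hab : Formula.imp a b ∈ Γ) (ha : a ∈ Γ) : b ∈ Γ :=
  mcs_mem_of_deriv hΓ ⟨[.imp a b, a], by
    intro ψ hψ; rcases List.mem_cons.1 hψ with rfl | hψ
    · exact hab
    · rcases List.mem_cons.1 hψ with rfl | hψ
      · exact ha
      · simp at hψ,
    TLEKThm.taut _ (by intro v; simp only [conjList, Formula.evalP]; tauto)⟩

lemma mcs_and {Γ : Set Formula} (hΓ : MaxConsistent Γ) {a b : Formula}
    (ha : a ∈ Γ) (hb : b ∈ Γ) : Formula.and a b ∈ Γ :=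
  mcs_mp hΓ (mcs_mp hΓ (mcs_mem_of_thm hΓ (TLEKThm.taut (.imp a (.imp b (.and a b)))
    (by intro v; simp only [Formula.evalP]; tauto))) ha) hb

lemma mcs_not_both {Γ : Set Formula} (hΓ : MaxConsistent Γ) {φ : Formula}
    (h : φ ∈ Γ) (hn : Formula.neg φ ∈ Γ) : False :=
  hΓ.1 ⟨[φ, .neg φ], by
    intro ψ hψ; rcases List.mem_cons.1 hψ with rfl | hψ
    · exact h
    · rcases List.mem_cons.1 hψ with rfl | hψ
      · exact hn
      · simp at hψ,
    TLEKThm.taut _ (by intro v; simp only [conjList, Formula.evalP]; tauto)⟩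

lemma mcs_neg {Γ : Set Formula} (hΓ : MaxConsistent Γ) {φ : Formula}
    (h : φ ∉ Γ) : Formula.neg φ ∈ Γ := by
  obtain ⟨l2, hl2, hthm2⟩ := not_not.1 (hΓ.2 φ h)
  set L := l2.filter (fun ψ => decide (ψ ≠ φ)) with hLdef
  have hmem : ∀ ψ ∈ l2, TLEKThm (.imp (conjList (φ :: L)) ψ) := by
    intro ψ hψ
    by_cases he : ψ = φ
    · subst he; exact conj_mem _ _ (List.mem_cons_self)
    · exact conj_mem _ _ (List.mem_cons_of_mem _ (List.mem_filter.2 ⟨hψ, by simp [he]⟩))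
  have himp := conj_intro (φ :: L) l2 hmem
  have hfin : TLEKThm (.imp (conjList L) (.neg φ)) :=
    thm_mp2 (TLEKThm.taut (.imp (.imp (conjList (φ :: L)) (conjList l2))
      (.imp (.neg (conjList l2)) (.imp (conjList L) (.neg φ))))
      (by intro v; simp only [conjList, Formula.evalP]; tauto)) himp hthm2
  refine mcs_mem_of_deriv hΓ ⟨L, ?_, hfin⟩
  intro ψ hψ
  have := List.mem_filter.1 hψ
  have hne : ψ ≠ φ := by simpa using this.2
  rcases hl2 ψ this.1 with h2 | h2
  · exact absurd h2 hne
  · exact h2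

lemma mcs_know_conj {Γ : Set Formula} (hΓ : MaxConsistent Γ) : ∀ (l : List Formula),
    (∀ ψ ∈ l, Formula.know ψ ∈ Γ) → Formula.know (conjList l) ∈ Γ
  | [], _ => mcs_mem_of_thm hΓ (TLEKThm.nec (TLEKThm.taut _
      (by intro v; simp only [conjList, Formula.evalP]; tauto)))
  | a :: t, h => by
    have hKa := h a (List.mem_cons_self)
    have hKt := mcs_know_conj hΓ t (fun ψ hψ => h ψ (List.mem_cons_of_mem _ hψ))
    have h1 : TLEKThm (.imp a (.imp (conjList t) (.and a (conjList t)))) :=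
      TLEKThm.taut _ (by intro v; simp only [Formula.evalP]; tauto)
    have h2 := mcs_mem_of_thm hΓ (TLEKThm.nec h1)
    have h3 := mcs_mem_of_thm hΓ (TLEKThm.axK a (.imp (conjList t) (.and a (conjList t))))
    have h4 : Formula.know (.imp (conjList t) (.and a (conjList t))) ∈ Γ :=
      mcs_mp hΓ h3 (mcs_and hΓ hKa h2)
    have h5 := mcs_mem_of_thm hΓ (TLEKThm.axK (conjList t) (.and a (conjList t)))
    have h6 : Formula.know (.and a (conjList t)) ∈ Γ :=
      mcs_mp hΓ h5 (mcs_and hΓ hKt h4)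
    simpa [conjList] using h6

lemma mcs_know_of_deriv {Γ : Set Formula} (hΓ : MaxConsistent Γ) {χ : Formula}
    (l : List Formula) (hK : ∀ ψ ∈ l, Formula.know ψ ∈ Γ)
    (h : TLEKThm (.imp (conjList l) χ)) : Formula.know χ ∈ Γ := by
  have h1 := mcs_know_conj hΓ l hK
  have h2 := mcs_mem_of_thm hΓ (TLEKThm.nec h)
  exact mcs_mp hΓ (mcs_mem_of_thm hΓ (TLEKThm.axK (conjList l) χ)) (mcs_and hΓ h1 h2)

lemma chain_finite {c : Set (Set Formula)} (hc : IsChain (· ⊆ ·) c)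
    (hne : c.Nonempty) : ∀ l : List Formula, (∀ φ ∈ l, φ ∈ ⋃₀ c) →
    ∃ t ∈ c, ∀ φ ∈ l, φ ∈ t
  | [], _ => ⟨hne.choose, hne.choose_spec, by simp⟩
  | a :: t, h => by
    obtain ⟨s, hs, hst⟩ := chain_finite hc hne t (fun φ hφ => h φ (List.mem_cons_of_mem _ hφ))
    obtain ⟨s2, hs2, ha⟩ := h a (List.mem_cons_self)
    by_cases he : s = s2
    · subst he
      refine ⟨s, hs, fun φ hφ => ?_⟩
      rcases List.mem_cons.1 hφ with rfl | hφ
      · exact ha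
      · exact hst φ hφ
    rcases hc hs hs2 he with hle | hle
    · refine ⟨s2, hs2, fun φ hφ => ?_⟩
      rcases List.mem_cons.1 hφ with rfl | hφ
      · exact ha
      · exact hle (hst φ hφ)
    · refine ⟨s, hs, fun φ hφ => ?_⟩
      rcases List.mem_cons.1 hφ with rfl | hφ
      · exact hle ha
      · exact hst φ hφ

lemma lindenbaum {Γ : Set Formula} (h : Consistent Γ) :
    ∃ Δ, Γ ⊆ Δ ∧ MaxConsistent Δ := by
  have hch : ∀ c ⊆ {Δ : Set Formula | Consistent Δ}, IsChain (· ⊆ ·) c → c.Nonempty →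
      ∃ ub ∈ {Δ : Set Formula | Consistent Δ}, ∀ s ∈ c, s ⊆ ub := by
    intro c hcS hchain hne
    refine ⟨⋃₀ c, ?_, fun s hs => Set.subset_sUnion_of_mem hs⟩
    rintro ⟨l, hl, hthm⟩
    obtain ⟨t, htc, ht⟩ := chain_finite hchain hne l hl
    exact hcS htc ⟨l, ht, hthm⟩
  obtain ⟨m, hm, hmax⟩ := zorn_subset_nonempty {Δ : Set Formula | Consistent Δ} hch Γ h
  refine ⟨m, hm, hmax.1, fun φ hφ hcons => ?_⟩
  exact hφ (hmax.2 hcons (Set.subset_insert _ _) (Set.mem_insert _ _))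

/-- Lemma 1: in the canonical T-LEK model, if `BΦ ∈ w` but
`BΨ ∉ w`, then there is `v ∈ R_c(w)` with `Φ ∈ v ↔ Ψ ∉ v`. -/
theorem canonical_bel_separation (w : CWorld) (Φ Ψ : Formula)
    (h1 : Formula.bel Φ ∈ w.1) (h2 : Formula.bel Ψ ∉ w.1) :
    ∃ v : CWorld, CRel w v ∧ (Φ ∈ v.1 ↔ Ψ ∉ v.1) := by
  by_contra hcon
  push_neg at hcon
  have hsame : ∀ v : CWorld, CRel w v → (Φ ∈ v.1 ↔ Ψ ∈ v.1) := by
    intro v hv; have := hcon v hv; tauto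
  have hw := w.2
  set χ : Formula := Formula.iff Φ Ψ with hχdef
  have hK : Formula.know χ ∈ w.1 := by
    by_contra hKn
    set Γ0 : Set Formula := insert (.neg χ) {ψ | Formula.know ψ ∈ w.1} with hΓ0
    have hcons : Consistent Γ0 := by
      rintro ⟨l, hl, hthm⟩
      set L := l.filter (fun ψ => decide (ψ ≠ Formula.neg χ)) with hLdef
      have hmem : ∀ ψ ∈ l, TLEKThm (.imp (conjList (Formula.neg χ :: L)) ψ) := by
        intro ψ hψ
        by_cases he : ψ = Formula.neg χ
        · subst he; exact conj_mem _ _ (List.mem_cons_self)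
        · exact conj_mem _ _ (List.mem_cons_of_mem _ (List.mem_filter.2 ⟨hψ, by simp [he]⟩))
      have himp := conj_intro (Formula.neg χ :: L) l hmem
      have hLχ : TLEKThm (.imp (conjList L) χ) :=
        thm_mp2 (TLEKThm.taut (.imp (.imp (conjList (Formula.neg χ :: L)) (conjList l))
          (.imp (.neg (conjList l)) (.imp (conjList L) χ)))
          (by intro v; simp only [conjList, Formula.evalP]; tauto)) himp hthm
      refine hKn (mcs_know_of_deriv hw L ?_ hLχ)
      intro ψ hψ
      have := List.mem_filter.1 hψ
      have hne : ψ ≠ Formula.neg χ := by simpa using this.2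
      rcases hl ψ this.1 with h2 | h2
      · exact absurd h2 hne
      · exact h2
    obtain ⟨Δ, hsub, hΔ⟩ := lindenbaum hcons
    have hRel : CRel w ⟨Δ, hΔ⟩ := by
      intro ψ; constructor
      · intro h
        have h4 : Formula.know (Formula.know ψ) ∈ w.1 :=
          mcs_mp hw (mcs_mem_of_thm hw (TLEKThm.ax4 ψ)) h
        exact hsub (Set.mem_insert_of_mem _ h4)
      · intro h; by_contra hn
        have h5 : Formula.know (Formula.neg (Formula.know ψ)) ∈ w.1 :=
          mcs_mp hw (mcs_mem_of_thm hw (TLEKThm.ax5 ψ)) (mcs_neg hw hn)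
        exact mcs_not_both hΔ h (hsub (Set.mem_insert_of_mem _ h5))
    have hiff := hsame ⟨Δ, hΔ⟩ hRel
    have h1 : Formula.imp Φ Ψ ∈ Δ := by
      by_cases hΦ : Φ ∈ Δ
      · exact mcs_mp hΔ (mcs_mem_of_thm hΔ (TLEKThm.taut (.imp Ψ (.imp Φ Ψ))
          (by intro v; simp only [Formula.evalP]; tauto))) (hiff.1 hΦ)
      · exact mcs_mp hΔ (mcs_mem_of_thm hΔ (TLEKThm.taut (.imp (.neg Φ) (.imp Φ Ψ))
          (by intro v; simp only [Formula.evalP]; tauto))) (mcs_neg hΔ hΦ)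
    have h2' : Formula.imp Ψ Φ ∈ Δ := by
      by_cases hΨ : Ψ ∈ Δ
      · exact mcs_mp hΔ (mcs_mem_of_thm hΔ (TLEKThm.taut (.imp Φ (.imp Ψ Φ))
          (by intro v; simp only [Formula.evalP]; tauto))) (hiff.2 hΨ)
      · exact mcs_mp hΔ (mcs_mem_of_thm hΔ (TLEKThm.taut (.imp (.neg Ψ) (.imp Ψ Φ))
          (by intro v; simp only [Formula.evalP]; tauto))) (mcs_neg hΔ hΨ)
    have hχΔ : χ ∈ Δ := mcs_and hΔ h1 h2'
    exact mcs_not_both hΔ hχΔ (hsub (Set.mem_insert _ _))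
  have hB := mcs_mem_of_thm hw (TLEKThm.axB Φ Ψ)
  exact h2 (mcs_mp hw hB (mcs_and hw h1 hK))
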